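/- Let $X$ be a real vector space, $C \subset X$ nonempty convex, and $h_n : C \to \mathbb{R}$, $n \in \mathbb{N}$, a sequence of convex functions converging pointwise to a function $h_\infty$. Then there exists a sequence of nonnegative reals $(\alpha_\infty, \alpha_0, \alpha_1, \ldots) \in \ell^1$ with $\alpha_\infty + \sum_{n \geq 0} \alpha_n = 1$ such that $\inf_{u \in C} \big( \alpha_\infty h_\infty(u) + \sum_{n \geq 0} \alpha_n h_n(u) \big) = \inf_{u \in C} \sup_{n \in \mathbb{N}} h_n(u)$. -/

import Mathlib

open Filter Topology

section AuxOnePoint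
open OnePoint

lemma aux_coclosed : (coclosedCompact ℕ) = atTop := by
  rw [coclosedCompact_eq_cocompact, Filter.cocompact_eq_cofinite, Nat.cofinite_eq_atTop]

lemma aux_tendsto_coe : Tendsto ((↑) : ℕ → OnePoint ℕ) atTop (𝓝 ∞) :=
  aux_coclosed ▸ OnePoint.tendsto_coe_infty

lemma aux_cm_tendsto (x : C(OnePoint ℕ, ℝ)) :
    Tendsto (fun n : ℕ => x n) atTop (𝓝 (x ∞)) :=
  (x.continuous.tendsto _).comp aux_tendsto_coe

open scoped Classical in
noncomputable def eK (n : ℕ) : C(OnePoint ℕ, ℝ) :=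
  ⟨fun k => if k = (n : OnePoint ℕ) then 1 else 0, by
    apply IsLocallyConstant.continuous
    intro s
    by_cases h1 : (1:ℝ) ∈ s <;> by_cases h0 : (0:ℝ) ∈ s
    · convert isOpen_univ using 1
      ext k; simp only [Set.mem_preimage, Set.mem_univ, iff_true]
      split <;> assumption
    · have : (fun k : OnePoint ℕ => if k = (n : OnePoint ℕ) then (1:ℝ) else 0) ⁻¹' s
          = {(n : OnePoint ℕ)} := by
        ext k; simp only [Set.mem_preimage, Set.mem_singleton_iff]
        split <;> simp_all
      rw [this, OnePoint.isOpen_iff_of_notMem (by simp [OnePoint.infty_ne_coe])]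
      exact isOpen_discrete _
    · have : (fun k : OnePoint ℕ => if k = (n : OnePoint ℕ) then (1:ℝ) else 0) ⁻¹' s
          = {(n : OnePoint ℕ)}ᶜ := by
        ext k; simp only [Set.mem_preimage, Set.mem_compl_iff, Set.mem_singleton_iff]
        split <;> simp_all
      rw [this, OnePoint.isOpen_iff_of_mem (by simp [OnePoint.infty_ne_coe])]
      constructor
      · exact isClosed_discrete _
      · have : (OnePoint.some ⁻¹' ({(n : OnePoint ℕ)}ᶜ))ᶜ = {n} := by
          ext m; simp [OnePoint.coe_eq_coe]
        rw [this]; exact (Set.finite_singleton n).isCompact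
    · convert isOpen_empty using 1
      ext k; simp only [Set.mem_preimage, Set.mem_empty_iff_false, iff_false]
      split <;> assumption⟩

@[simp] lemma eK_coe (n m : ℕ) : eK n (m : OnePoint ℕ) = if m = n then 1 else 0 := by
  simp [eK, OnePoint.coe_eq_coe]

@[simp] lemma eK_infty (n : ℕ) : eK n ∞ = 0 := by
  simp [eK, OnePoint.infty_ne_coe]

lemma eK_nonneg (n : ℕ) (k : OnePoint ℕ) : 0 ≤ eK n k := by
  simp only [eK, ContinuousMap.coe_mk]; split <;> norm_num

lemma eK_sum_le (N : ℕ) (k : OnePoint ℕ) : (∑ i ∈ Finset.range N, eK i) k ≤ 1 := by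
  rw [ContinuousMap.sum_apply]
  induction k using OnePoint.rec with
  | infty => simp
  | coe m =>
    simp only [eK_coe, Finset.sum_ite_eq]
    split <;> norm_num

lemma rep (φ : C(OnePoint ℕ, ℝ) →L[ℝ] ℝ)
    (hpos : ∀ x : C(OnePoint ℕ, ℝ), (∀ k, 0 ≤ x k) → 0 ≤ φ x) (hone : φ 1 = 1) :
    ∃ (αinf : ℝ) (α : ℕ → ℝ), 0 ≤ αinf ∧ (∀ n, 0 ≤ α n) ∧ Summable α ∧
      αinf + ∑' n, α n = 1 ∧
      ∀ x : C(OnePoint ℕ, ℝ), φ x = αinf * x ∞ + ∑' n, α n * x n := by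
  set α : ℕ → ℝ := fun n => φ (eK n) with hα
  have hαnn : ∀ n, 0 ≤ α n := fun n => hpos _ (eK_nonneg n)
  have hsum_le : ∀ N, ∑ i ∈ Finset.range N, α i ≤ 1 := by
    intro N
    have h1 : 0 ≤ φ (1 - ∑ i ∈ Finset.range N, eK i) := by
      apply hpos
      intro k
      simp only [ContinuousMap.sub_apply, ContinuousMap.one_apply, sub_nonneg]
      exact eK_sum_le N k
    have h2 : φ (1 - ∑ i ∈ Finset.range N, eK i)
        = 1 - ∑ i ∈ Finset.range N, α i := by
      rw [map_sub, hone, map_sum]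
    linarith [h2 ▸ h1]
  have hαsum : Summable α := summable_of_sum_range_le hαnn hsum_le
  have htsum_le : ∑' n, α n ≤ 1 := Summable.tsum_le_of_sum_range_le hαsum hsum_le
  refine ⟨1 - ∑' n, α n, α, by linarith, hαnn, hαsum, by ring, ?_⟩
  intro x
  have hbd : ∀ k : OnePoint ℕ, |x k| ≤ ‖x‖ := fun k => by
    simpa using x.norm_coe_le_norm k
  have hsum1 : Summable (fun n : ℕ => α n * x n) := by
    apply Summable.of_norm_bounded (hαsum.mul_left ‖x‖)
    intro n
    rw [norm_mul, Real.norm_eq_abs, Real.norm_eq_abs, abs_of_nonneg (hαnn n)]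
    calc α n * |x n| ≤ α n * ‖x‖ := mul_le_mul_of_nonneg_left (hbd _) (hαnn n)
      _ = ‖x‖ * α n := mul_comm _ _
  have hsum2 : Summable (fun n : ℕ => (x n - x ∞) * α n) := by
    apply Summable.of_norm_bounded (hαsum.mul_left (‖x‖ + |x ∞|))
    intro n
    rw [norm_mul, Real.norm_eq_abs, Real.norm_eq_abs, abs_of_nonneg (hαnn n)]
    have : |x n - x ∞| ≤ ‖x‖ + |x ∞| := (abs_sub _ _).trans (by gcongr; exact hbd _)
    exact mul_le_mul_of_nonneg_right this (hαnn n)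
  set P : ℕ → C(OnePoint ℕ, ℝ) :=
    fun N => x ∞ • 1 + ∑ i ∈ Finset.range N, (x i - x ∞) • eK i with hP
  have hPval : ∀ N, φ (P N) = x ∞ + ∑ i ∈ Finset.range N, (x i - x ∞) * α i := by
    intro N
    simp only [hP, map_add, _root_.map_smul, map_sum, smul_eq_mul, hone, mul_one]
    rfl
  have hPtend : Tendsto P atTop (𝓝 x) := by
    rw [Metric.tendsto_atTop]
    intro ε hε
    obtain ⟨N₀, hN₀⟩ := Metric.tendsto_atTop.mp (aux_cm_tendsto x) (ε/2) (by linarith)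
    refine ⟨N₀, fun N hN => ?_⟩
    rw [dist_eq_norm]
    have hle : ‖P N - x‖ ≤ ε/2 := by
      refine (ContinuousMap.norm_le _ (by linarith)).mpr fun k => ?_
      induction k using OnePoint.rec with
      | infty =>
        have : (P N - x) ∞ = 0 := by
          simp [hP, ContinuousMap.sub_apply, ContinuousMap.add_apply,
            ContinuousMap.smul_apply, ContinuousMap.sum_apply]
        rw [this]; simp; linarith
      | coe m =>
        have hval : (P N - x) (m : OnePoint ℕ)
            = (if m ∈ Finset.range N then x m - x ∞ else 0) + (x ∞ - x m) := by
          simp only [ContinuousMap.sub_apply, ContinuousMap.add_apply,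
            ContinuousMap.smul_apply, ContinuousMap.one_apply, ContinuousMap.sum_apply,
            hP, eK_coe, smul_eq_mul, mul_one, mul_ite, mul_zero, Finset.sum_ite_eq]
          ring
        rw [hval]
        by_cases hm : m ∈ Finset.range N
        · rw [if_pos hm]; simp; linarith
        · rw [if_neg hm]
          have hmN : m ≥ N₀ := le_trans hN (le_of_not_gt (by simpa [Finset.mem_range] using hm))
          have := hN₀ m hmN
          rw [dist_eq_norm] at this
          rw [zero_add]
          calc ‖x ∞ - x m‖ = ‖x m - x ∞‖ := norm_sub_rev _ _
            _ ≤ ε/2 := le_of_lt this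
    linarith
  have ht1 : Tendsto (fun N => φ (P N)) atTop (𝓝 (φ x)) :=
    (φ.continuous.tendsto x).comp hPtend
  have ht2 : Tendsto (fun N => φ (P N)) atTop
      (𝓝 (x ∞ + ∑' i : ℕ, (x i - x ∞) * α i)) := by
    simp only [hPval]
    exact hsum2.hasSum.tendsto_sum_nat.const_add _
  have hval : φ x = x ∞ + ∑' i : ℕ, (x i - x ∞) * α i := tendsto_nhds_unique ht1 ht2
  rw [hval]
  have hsplit : ∑' i : ℕ, (x i - x ∞) * α i = ∑' i : ℕ, α i * x i - x ∞ * ∑' i, α i := by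
    rw [← tsum_mul_left, ← Summable.tsum_sub hsum1 (hαsum.mul_left _)]
    congr 1; funext i; ring
  rw [hsplit]; ring

noncomputable def Fcm (g : ℕ → ℝ) (a : ℝ) (hg : Tendsto g atTop (𝓝 a)) :
    C(OnePoint ℕ, ℝ) :=
  ⟨fun k => OnePoint.rec a g k, by
    rw [OnePoint.continuous_iff]
    refine ⟨?_, continuous_of_discreteTopology⟩
    rw [aux_coclosed]
    exact hg⟩

@[simp] lemma Fcm_coe (g : ℕ → ℝ) (a : ℝ) (hg : Tendsto g atTop (𝓝 a)) (n : ℕ) :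
    Fcm g a hg (n : OnePoint ℕ) = g n := rfl

@[simp] lemma Fcm_infty (g : ℕ → ℝ) (a : ℝ) (hg : Tendsto g atTop (𝓝 a)) :
    Fcm g a hg ∞ = a := rfl

end AuxOnePoint

theorem stmt_9 {X : Type*} [AddCommGroup X] [Module ℝ X]
    (C : Set X) (hC : C.Nonempty) (hCconv : Convex ℝ C)
    (h : ℕ → X → ℝ) (hinf : X → ℝ)
    (hconv : ∀ n, ConvexOn ℝ C (h n))
    (hlim : ∀ u ∈ C, Tendsto (fun n => h n u) atTop (𝓝 (hinf u))) :
    ∃ (αinf : ℝ) (α : ℕ → ℝ), 0 ≤ αinf ∧ (∀ n, 0 ≤ α n) ∧ Summable α ∧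
      αinf + ∑' n, α n = 1 ∧
      (⨅ u : C, ((αinf * hinf u + ∑' n, α n * h n u : ℝ) : EReal)) =
        ⨅ u : C, ⨆ n : ℕ, ((h n u : ℝ) : EReal) := by
  classical
  open OnePoint in
  obtain ⟨u₀, hu₀⟩ := hC
  have hbdd : ∀ u ∈ C, BddAbove (Set.range fun n => h n u) :=
    fun u hu => (hlim u hu).bddAbove_range
  set s : X → ℝ := fun u => ⨆ n, h n u with hs
  have hle_s : ∀ u ∈ C, ∀ n, h n u ≤ s u := fun u hu n => le_ciSup (hbdd u hu) n
  have hinf_le_s : ∀ u ∈ C, hinf u ≤ s u := fun u hu =>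
    le_of_tendsto' (hlim u hu) (fun n => hle_s u hu n)
  have hRHS : ∀ u : C, (⨆ n : ℕ, ((h n (u:X) : ℝ) : EReal)) = ((s u : ℝ) : EReal) := by
    intro u
    refine (Monotone.map_ciSup_of_continuousAt ?_ ?_ (hbdd u u.2)).symm
    · exact continuous_coe_real_ereal.continuousAt
    · exact fun a b hab => EReal.coe_le_coe_iff.mpr hab
  set m : EReal := ⨅ u : C, ((s u : ℝ) : EReal) with hm
  have hgoalR : (⨅ u : C, ⨆ n : ℕ, ((h n (u : X) : ℝ) : EReal)) = m := iInf_congr hRHS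
  by_cases hbot : m = ⊥
  · refine ⟨1, fun _ => 0, zero_le_one, fun _ => le_refl 0, summable_zero, by simp, ?_⟩
    rw [hgoalR, hbot]
    have hsimp : ∀ u : C, ((1 * hinf u + ∑' n : ℕ, (0:ℝ) * h n (u:X) : ℝ) : EReal)
        = ((hinf u : ℝ) : EReal) := by
      intro u; norm_num
    rw [iInf_congr hsimp]
    refine le_bot_iff.mp ?_
    rw [← hbot, hm]
    exact iInf_mono fun u => EReal.coe_le_coe_iff.mpr (hinf_le_s u u.2)
  · have htop : m ≠ ⊤ :=
      ne_top_of_le_ne_top (EReal.coe_ne_top (s u₀)) (iInf_le _ (⟨u₀, hu₀⟩ : C))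
    set r : ℝ := m.toReal with hr
    have hrm : (r : EReal) = m := EReal.coe_toReal htop hbot
    have hrs : ∀ u : C, r ≤ s u := fun u =>
      EReal.coe_le_coe_iff.mp (le_trans (le_of_eq hrm) (iInf_le _ u))
    -- the embedding of C into C(OnePoint ℕ, ℝ)
    let fu : C → C(OnePoint ℕ, ℝ) :=
      fun u => Fcm (fun n => h n u) (hinf u) (hlim u u.2)
    have fu_coe : ∀ (u : C) (n : ℕ), fu u (n : OnePoint ℕ) = h n u := fun u n => rfl
    have fu_infty : ∀ u : C, fu u ∞ = hinf u := fun u => rfl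
    set A : Set C(OnePoint ℕ, ℝ) := {y | ∃ u : C, ∀ k, fu u k ≤ y k} with hA
    set B : Set C(OnePoint ℕ, ℝ) := {y | ∀ k, y k < r} with hB
    have hBopen : IsOpen B := by
      rw [Metric.isOpen_iff]
      intro y hy
      obtain ⟨k₀, -, hk₀⟩ := IsCompact.exists_isMaxOn isCompact_univ ⟨∞, trivial⟩
        y.continuous.continuousOn
      refine ⟨r - y k₀, by simpa using sub_pos.mpr (hy k₀), fun z hz => ?_⟩
      intro k
      have h1 : z k - y k ≤ ‖z - y‖ := by
        calc z k - y k ≤ |z k - y k| := le_abs_self _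
          _ = |(z - y) k| := by rw [ContinuousMap.sub_apply]
          _ ≤ ‖z - y‖ := by simpa using (z - y).norm_coe_le_norm k
      have h2 : ‖z - y‖ < r - y k₀ := by
        rw [← dist_eq_norm]; exact Metric.mem_ball.mp hz
      have h3 : y k ≤ y k₀ := hk₀ (Set.mem_univ k)
      linarith
    have hBconv : Convex ℝ B := by
      have hBeq : B = ⋂ k, {y : C(OnePoint ℕ, ℝ) | y k < r} := by
        ext y; simp [hB, Set.mem_iInter]
      rw [hBeq]
      exact convex_iInter fun k => convex_halfSpace_lt ⟨fun a b => rfl, fun c a => rfl⟩ r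
    have hAconv : Convex ℝ A := by
      rintro y ⟨u, hu⟩ z ⟨v, hv⟩ a b ha hb hab
      refine ⟨⟨a • (u:X) + b • (v:X), hCconv u.2 v.2 ha hb hab⟩, fun k => ?_⟩
      have hay : ∀ k, a * fu u k ≤ a * y k := fun k =>
        mul_le_mul_of_nonneg_left (hu k) ha
      have hbz : ∀ k, b * fu v k ≤ b * z k := fun k =>
        mul_le_mul_of_nonneg_left (hv k) hb
      have happly : (a • y + b • z) k = a * y k + b * z k := by
        simp [ContinuousMap.add_apply, ContinuousMap.smul_apply, smul_eq_mul]
      rw [happly]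
      induction k using OnePoint.rec with
      | infty =>
        rw [fu_infty]
        have hcomb : hinf (a • (u:X) + b • (v:X)) ≤ a * hinf u + b * hinf v := by
          have hmem : a • (u:X) + b • (v:X) ∈ C := hCconv u.2 v.2 ha hb hab
          refine le_of_tendsto_of_tendsto' (hlim _ hmem)
            (((hlim u u.2).const_mul a).add ((hlim v v.2).const_mul b)) fun n => ?_
          have := (hconv n).2 u.2 v.2 ha hb hab
          simpa [smul_eq_mul] using this
        calc hinf (a • (u:X) + b • (v:X)) ≤ a * hinf u + b * hinf v := hcomb
          _ = a * fu u ∞ + b * fu v ∞ := by rw [fu_infty, fu_infty]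
          _ ≤ a * y ∞ + b * z ∞ := add_le_add (hay ∞) (hbz ∞)
      | coe n =>
        rw [fu_coe]
        have hcomb : h n (a • (u:X) + b • (v:X)) ≤ a * h n u + b * h n v := by
          have := (hconv n).2 u.2 v.2 ha hb hab
          simpa [smul_eq_mul] using this
        calc h n (a • (u:X) + b • (v:X)) ≤ a * h n u + b * h n v := hcomb
          _ = a * fu u (n : OnePoint ℕ) + b * fu v (n : OnePoint ℕ) := by
              rw [fu_coe, fu_coe]
          _ ≤ a * y (n : OnePoint ℕ) + b * z (n : OnePoint ℕ) := add_le_add (hay _) (hbz _)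
    have hdisj : Disjoint B A := by
      rw [Set.disjoint_left]
      rintro y hyB ⟨u, hu⟩
      obtain ⟨k₀, -, hk₀⟩ := IsCompact.exists_isMaxOn isCompact_univ ⟨∞, trivial⟩
        y.continuous.continuousOn
      have hsu : s u ≤ y k₀ := ciSup_le fun n => by
        calc h n (u : X) = fu u (n : OnePoint ℕ) := (fu_coe u n).symm
          _ ≤ y (n : OnePoint ℕ) := hu _
          _ ≤ y k₀ := hk₀ (Set.mem_univ _)
      have := hrs u
      have := hyB k₀
      linarith
    obtain ⟨φ, c, hφB, hφA⟩ := geometric_hahn_banach_open hBconv hBopen hAconv hdisj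
    have ha₀ : fu ⟨u₀, hu₀⟩ ∈ A := ⟨⟨u₀, hu₀⟩, fun k => le_refl _⟩
    have hpos : ∀ x : C(OnePoint ℕ, ℝ), (∀ k, 0 ≤ x k) → 0 ≤ φ x := by
      intro x hx
      by_contra hneg
      push_neg at hneg
      have hca₀ : c ≤ φ (fu ⟨u₀, hu₀⟩) := hφA _ ha₀
      set t : ℝ := (φ (fu ⟨u₀, hu₀⟩) - c + 1) / (-φ x) with ht
      have htpos : 0 ≤ t := div_nonneg (by linarith) (by linarith)
      have hmem : fu ⟨u₀, hu₀⟩ + t • x ∈ A := by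
        refine ⟨⟨u₀, hu₀⟩, fun k => ?_⟩
        have h0 : 0 ≤ t * x k := mul_nonneg htpos (hx k)
        simp only [ContinuousMap.add_apply, ContinuousMap.smul_apply, smul_eq_mul]
        linarith
      have hge := hφA _ hmem
      rw [map_add, _root_.map_smul, smul_eq_mul] at hge
      have hxne : φ x ≠ 0 := ne_of_lt hneg
      have htmul : t * φ x = -(φ (fu ⟨u₀, hu₀⟩) - c + 1) := by
        rw [ht, div_mul_eq_mul_div, mul_div_assoc, div_neg, div_self hxne]
        ring
      rw [htmul] at hge
      linarith
    have hφ1nn : 0 ≤ φ 1 := hpos 1 (fun k => by norm_num)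
    have hφ1 : 0 < φ 1 := by
      rcases hφ1nn.lt_or_eq with hlt | heq
      · exact hlt
      exfalso
      have hzero : ∀ x : C(OnePoint ℕ, ℝ), φ x = 0 := by
        intro x
        have hxk : ∀ k, x k ≤ ‖x‖ := fun k =>
          le_trans (le_abs_self _) (by simpa using x.norm_coe_le_norm k)
        have hxk' : ∀ k, -‖x‖ ≤ x k := fun k =>
          neg_le_of_neg_le (le_trans (neg_le_abs _) (by simpa using x.norm_coe_le_norm k))
        have h1 := hpos (‖x‖ • 1 - x) (fun k => by
          simp only [ContinuousMap.sub_apply, ContinuousMap.smul_apply,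
            ContinuousMap.one_apply, smul_eq_mul, mul_one, sub_nonneg]
          exact hxk k)
        have h2 := hpos (‖x‖ • 1 + x) (fun k => by
          simp only [ContinuousMap.add_apply, ContinuousMap.smul_apply,
            ContinuousMap.one_apply, smul_eq_mul, mul_one]
          linarith [hxk' k])
        rw [map_sub, _root_.map_smul, smul_eq_mul, ← heq] at h1
        rw [map_add, _root_.map_smul, smul_eq_mul, ← heq] at h2
        simp at h1 h2
        linarith
      have hbmem : ((r - 1) • 1 : C(OnePoint ℕ, ℝ)) ∈ B := fun k => by
        simp only [ContinuousMap.smul_apply, ContinuousMap.one_apply, smul_eq_mul, mul_one]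
        linarith
      have hblt := hφB _ hbmem
      have hage := hφA _ ha₀
      rw [hzero] at hblt
      rw [hzero] at hage
      linarith
    have hrc : r ≤ c / φ 1 := by
      refine le_of_forall_lt fun s' hs' => ?_
      rw [lt_div_iff₀ hφ1]
      have hmem : (s' • 1 : C(OnePoint ℕ, ℝ)) ∈ B := fun k => by
        simp only [ContinuousMap.smul_apply, ContinuousMap.one_apply, smul_eq_mul, mul_one]
        exact hs'
      have := hφB _ hmem
      rwa [_root_.map_smul, smul_eq_mul] at this
    set ψ : C(OnePoint ℕ, ℝ) →L[ℝ] ℝ := (φ 1)⁻¹ • φ with hψ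
    have hψapp : ∀ x, ψ x = (φ 1)⁻¹ * φ x := fun x => rfl
    have hψpos : ∀ x : C(OnePoint ℕ, ℝ), (∀ k, 0 ≤ x k) → 0 ≤ ψ x := fun x hx => by
      rw [hψapp]
      exact mul_nonneg (inv_nonneg.mpr hφ1nn) (hpos x hx)
    have hψ1 : ψ 1 = 1 := by
      rw [hψapp]
      exact inv_mul_cancel₀ (ne_of_gt hφ1)
    obtain ⟨αinf, α, hαinf, hαnn, hαsum, hαtotal, hrep⟩ := rep ψ hψpos hψ1
    have hcombo : ∀ u : C, ψ (fu u) = αinf * hinf u + ∑' n, α n * h n u := by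
      intro u
      rw [hrep (fu u), fu_infty]
      exact congrArg _ (tsum_congr fun n => by rw [fu_coe])
    have hlow : ∀ u : C, r ≤ ψ (fu u) := by
      intro u
      have h1 : c ≤ φ (fu u) := hφA _ ⟨u, fun k => le_refl _⟩
      rw [hψapp]
      calc r ≤ c / φ 1 := hrc
        _ = (φ 1)⁻¹ * c := div_eq_inv_mul c (φ 1)
        _ ≤ (φ 1)⁻¹ * φ (fu u) :=
            mul_le_mul_of_nonneg_left h1 (inv_nonneg.mpr hφ1nn)
    have hup : ∀ u : C, ψ (fu u) ≤ s u := by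
      intro u
      have h1 := hψpos ((s u) • 1 - fu u) (fun k => by
        simp only [ContinuousMap.sub_apply, ContinuousMap.smul_apply,
          ContinuousMap.one_apply, smul_eq_mul, mul_one, sub_nonneg]
        induction k using OnePoint.rec with
        | infty => rw [fu_infty]; exact hinf_le_s u u.2
        | coe n => rw [fu_coe]; exact hle_s u u.2 n)
      rw [map_sub, _root_.map_smul, smul_eq_mul, hψ1, mul_one] at h1
      linarith
    refine ⟨αinf, α, hαinf, hαnn, hαsum, hαtotal, ?_⟩
    rw [hgoalR, ← hrm]
    have hLHS : ∀ u : C, ((αinf * hinf u + ∑' n, α n * h n (u:X) : ℝ) : EReal)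
        = ((ψ (fu u) : ℝ) : EReal) := fun u => by rw [hcombo u]
    rw [iInf_congr hLHS]
    apply le_antisymm
    · calc (⨅ u : C, ((ψ (fu u) : ℝ) : EReal))
          ≤ ⨅ u : C, ((s u : ℝ) : EReal) :=
            iInf_mono fun u => EReal.coe_le_coe_iff.mpr (hup u)
        _ = m := hm.symm
        _ = (r : EReal) := hrm.symm
    · exact le_iInf fun u => EReal.coe_le_coe_iff.mpr (hlow u)
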